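/- (Additive drift, unbounded search space.) Let (X_t)_{t∈ℕ} be a sequence of nonnegative real-valued random variables adapted to a filtration (F_t)_{t≥0}, with X₀ = x₀ almost surely for a fixed x₀ ≥ 0, and let T = inf{t ∈ ℕ : X_t = 0}. Suppose there exists δ > 0 such that for every t ∈ ℕ, almost surely on the event {t < T}, E[X_t − X_{t+1} | F_t] ≥ δ. Then E[T] ≤ x₀ / δ. -/

import Mathlib

open MeasureTheory

/-- **Theorem (additive drift, unbounded search space).** Let `(X_t)` be nonnegative
real-valued integrable random variables adapted to a filtration `(ℱ_t)`, with
`X₀ = x₀` a.s., and let `T = inf {t | X_t = 0}`. If there is `δ > 0` such that for all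
`t`, a.s. on the event `{t < T}`, `E[X_t − X_{t+1} | ℱ_t] ≥ δ`, then `E[T] ≤ x₀/δ`,
where `E[T] = Σ_{t≥0} Pr[T > t]`. -/
theorem additive_drift_unbounded
    {Ω : Type*} {m : MeasurableSpace Ω} (μ : Measure Ω) [IsProbabilityMeasure μ]
    (ℱ : Filtration ℕ m) (X : ℕ → Ω → ℝ)
    (hnonneg : ∀ t ω, 0 ≤ X t ω)
    (hadapted : Adapted ℱ X)
    (hint : ∀ t, Integrable (X t) μ)
    (x₀ : ℝ) (hx₀ : 0 ≤ x₀) (hX0 : ∀ᵐ ω ∂μ, X 0 ω = x₀)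
    (δ : ℝ) (hδ : 0 < δ)
    (hdrift : ∀ t : ℕ, ∀ᵐ ω ∂μ, (∀ s ≤ t, X s ω ≠ 0) →
        δ ≤ (μ[X t - X (t + 1) | ℱ t]) ω) :
    ∑' t : ℕ, μ {ω | ∀ s ≤ t, X s ω ≠ 0} ≤ ENNReal.ofReal (x₀ / δ) := by
  set A : ℕ → Set Ω := fun t => {ω | ∀ s ≤ t, X s ω ≠ 0} with hA
  -- measurability of A t w.r.t. ℱ t
  have hAmeas : ∀ t, MeasurableSet[ℱ t] (A t) := by
    intro t
    have : A t = ⋂ s ∈ Set.Iic t, {ω | X s ω ≠ 0} := by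
      ext ω
      simp [hA]
    rw [this]
    refine MeasurableSet.biInter (Set.to_countable _) fun s hs => ?_
    exact ((hadapted s).mono (ℱ.mono hs) le_rfl) (measurableSet_singleton 0).compl
  have hAmeas' : ∀ t, MeasurableSet (A t) := fun t => ℱ.le t _ (hAmeas t)
  have hAsub : ∀ t, A (t + 1) ⊆ A t := fun t ω hω s hs => hω s (hs.trans (Nat.le_succ t))
  set g : ℕ → ℝ := fun t => ∫ ω in A t, X t ω ∂μ with hg
  have hgnonneg : ∀ t, 0 ≤ g t := fun t =>
    setIntegral_nonneg (hAmeas' t) fun ω _ => hnonneg t ω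
  -- main step
  have key : ∀ t, δ * (μ (A t)).toReal + g (t + 1) ≤ g t := by
    intro t
    have hconds : ∫ ω in A t, (μ[X t - X (t + 1) | ℱ t]) ω ∂μ
        = ∫ ω in A t, (X t ω - X (t + 1) ω) ∂μ :=
      setIntegral_condExp (ℱ.le t) ((hint t).sub (hint (t + 1))) (hAmeas t)
    have hlow : δ * (μ (A t)).toReal ≤ ∫ ω in A t, (μ[X t - X (t + 1) | ℱ t]) ω ∂μ := by
      have h1 : ∫ ω in A t, (δ : ℝ) ∂μ ≤ ∫ ω in A t, (μ[X t - X (t + 1) | ℱ t]) ω ∂μ := by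
        refine integral_mono_ae (integrable_const δ) (integrable_condExp.restrict) ?_
        filter_upwards [ae_restrict_of_ae (hdrift t), ae_restrict_mem (hAmeas' t)]
          with ω h hω
        exact h hω
      simpa [mul_comm, measureReal_def] using h1
    have hsplit : ∫ ω in A t, (X t ω - X (t + 1) ω) ∂μ
        = g t - ∫ ω in A t, X (t + 1) ω ∂μ :=
      integral_sub ((hint t).restrict) ((hint (t + 1)).restrict)
    have hmono : g (t + 1) ≤ ∫ ω in A t, X (t + 1) ω ∂μ := by
      refine setIntegral_mono_set ((hint (t + 1)).restrict) ?_ (Filter.Eventually.of_forall (hAsub t))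
      exact Filter.Eventually.of_forall fun ω => hnonneg (t + 1) ω
    have := hlow.trans_eq (hconds.trans hsplit)
    linarith
  -- hpartial sums
  have hpartial : ∀ n : ℕ, δ * ∑ t ∈ Finset.range n, (μ (A t)).toReal ≤ x₀ := by
    intro n
    have hg0 : g 0 ≤ x₀ := by
      have h1 : g 0 ≤ ∫ ω, X 0 ω ∂μ :=
        setIntegral_le_integral (hint 0) (Filter.Eventually.of_forall fun ω => hnonneg 0 ω)
      have h2 : ∫ ω, X 0 ω ∂μ = x₀ := by
        rw [integral_congr_ae hX0]
        simp
      linarith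
    have hch : δ * ∑ t ∈ Finset.range n, (μ (A t)).toReal ≤ g 0 - g n := by
      induction n with
      | zero => simp
      | succ k ih =>
        have := key k
        rw [Finset.sum_range_succ, mul_add]
        linarith
    have := hgnonneg n
    linarith
  -- translate to ENNReal
  rw [ENNReal.tsum_eq_iSup_sum]
  refine iSup_le fun s => ?_
  obtain ⟨n, hn⟩ : ∃ n, s ⊆ Finset.range n := ⟨(s.sup id) + 1, fun x hx =>
    Finset.mem_range.2 (Nat.lt_succ_of_le (Finset.le_sup (f := id) hx))⟩
  have h1 : ∑ t ∈ s, μ (A t) ≤ ∑ t ∈ Finset.range n, μ (A t) :=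
    Finset.sum_le_sum_of_subset hn
  have hfin : ∀ t, μ (A t) ≠ ⊤ := fun t => measure_ne_top μ _
  have h2 : ∑ t ∈ Finset.range n, μ (A t)
      = ENNReal.ofReal (∑ t ∈ Finset.range n, (μ (A t)).toReal) := by
    rw [ENNReal.ofReal_sum_of_nonneg fun t _ => ENNReal.toReal_nonneg]
    exact Finset.sum_congr rfl fun t _ => (ENNReal.ofReal_toReal (hfin t)).symm
  refine h1.trans (h2.le.trans (ENNReal.ofReal_le_ofReal ?_))
  rw [le_div_iff₀ hδ, mul_comm]
  exact hpartial n
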